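/- In the batch cut algorithm, define for each marked arc e = (u,v) a pointer to next(e) = right-neighbor of twin(e) in the Euler tour if that arc is also marked, else null. Then the directed graph induced by these pointers on the marked arcs is a union of simple paths (contains no cycle), because following twin-then-right repeatedly from any arc (u,v) eventually reaches the loop arc (u,u), which is never marked. -/

import Mathlib

/-- `l` is an Euler tour of the arc multiset `arcs`: a nonempty closed walk using each
arc exactly once, where consecutive arcs chain (head of one arc = tail of the next)
and the tour closes up cyclically. -/
def IsEulerTour {V : Type*} (arcs : Multiset (V × V)) (l : List (V × V)) : Prop :=
  l ≠ [] ∧ (↑l : Multiset (V × V)) = arcs ∧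
    List.Chain' (fun a b => a.2 = b.1) l ∧
    ∀ h : l ≠ [], (l.getLast h).2 = (l.head h).1

/-- The arc multiset of the Euler-tour transformation of a graph `G`: each undirected
edge `{u,v}` is replaced by the two directed arcs `(u,v)`, `(v,u)`, and a self-loop
`(v,v)` is added at every vertex. -/
def treeArcs {V : Type*} [Fintype V] [DecidableEq V] (G : SimpleGraph V)
    [DecidableRel G.Adj] : Multiset (V × V) :=
  (Finset.univ.filter (fun a : V × V => G.Adj a.1 a.2)).val
    + Finset.univ.val.map (fun v : V => (v, v))


/-- The arcs of the transformed multigraph lying in the connected component of `w`. -/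
def componentArcs {V : Type*} [Fintype V] [DecidableEq V] (G : SimpleGraph V)
    [DecidableRel G.Adj] [DecidableRel G.Reachable] (w : V) : Multiset (V × V) :=
  (treeArcs G).filter (fun a => G.Reachable w a.1)

namespace BatchCut17

lemma dlem1 {n : ℕ} (x y : ℕ) (hx : x < n) (hy : y < n) :
    (x + (y + n - x) % n) % n = y := by
  rw [Nat.add_mod_mod]
  have h : x + (y + n - x) = y + n := by omega
  rw [h, Nat.add_mod_right, Nat.mod_eq_of_lt hy]

lemma dlem2 {n : ℕ} (x d : ℕ) (hx : x < n) (hd : d < n) :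
    ((x + d) % n + n - x) % n = d := by
  have h : (x + d) % n + n - x = (x + d) % n + (n - x) := by omega
  rw [h, Nat.mod_add_mod]
  have h2 : x + d + (n - x) = d + n := by omega
  rw [h2, Nat.add_mod_right, Nat.mod_eq_of_lt hd]

variable {V : Type*} [Fintype V] [DecidableEq V] (G : SimpleGraph V)
  [DecidableRel G.Adj] [DecidableRel G.Reachable] (w : V)

lemma mem_componentArcs (a : V × V) :
    a ∈ componentArcs G w ↔ (G.Adj a.1 a.2 ∨ a.2 = a.1) ∧ G.Reachable w a.1 := by
  unfold componentArcs treeArcs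
  rw [Multiset.mem_filter, Multiset.mem_add]
  constructor
  · rintro ⟨h1 | h1, h2⟩
    · exact ⟨Or.inl (Finset.mem_filter.mp h1).2, h2⟩
    · obtain ⟨v, -, hv⟩ := Multiset.mem_map.mp h1
      exact ⟨Or.inr (by rw [← hv]), h2⟩
  · rintro ⟨h1 | h1, h2⟩
    · exact ⟨Or.inl (Finset.mem_filter.mpr ⟨Finset.mem_univ _, h1⟩), h2⟩
    · refine ⟨Or.inr (Multiset.mem_map.mpr ⟨a.1, Finset.mem_univ _, ?_⟩), h2⟩
      exact Prod.ext rfl h1.symm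

lemma nodup_componentArcs : (componentArcs G w).Nodup := by
  apply Multiset.Nodup.filter
  unfold treeArcs
  rw [Multiset.nodup_add]
  refine ⟨(Finset.univ.filter (fun a : V × V => G.Adj a.1 a.2)).nodup,
    Multiset.Nodup.map (fun x y h => congrArg Prod.fst h) Finset.univ.nodup, ?_⟩
  rw [Multiset.disjoint_left]
  intro a ha hb
  have hadj : G.Adj a.1 a.2 := (Finset.mem_filter.mp ha).2
  obtain ⟨v, -, hv⟩ := Multiset.mem_map.mp hb
  rw [← hv] at hadj
  exact G.loopless.irrefl _ hadj

end BatchCut17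
theorem batch_cut_next_pointers_acyclic
    {V : Type*} [Fintype V] [DecidableEq V] (G : SimpleGraph V)
    [DecidableRel G.Adj] [DecidableRel G.Reachable] (hF : G.IsAcyclic)
    (w : V) (l : List (V × V)) (hl : IsEulerTour (componentArcs G w) l)
    (M : Set (V × V)) (hM : ∀ a ∈ M, a ∈ l) (hloop : ∀ x : V, (x, x) ∉ M) :
    ∀ e ∈ M,
      (∃ k : ℕ,
        (fun a : V × V => l.getD ((l.idxOf (a.2, a.1) + 1) % l.length) a)^[k] e
          = (e.1, e.1)) ∧
      (∃ k : ℕ,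
        (fun a : V × V => l.getD ((l.idxOf (a.2, a.1) + 1) % l.length) a)^[k] e
          ∉ M) := by
  classical
  have hI : (instBEqOfDecidableEq : BEq (V × V)) = instBEqProd := by
    have h : ∀ a b : V × V,
        (@BEq.beq _ (instBEqOfDecidableEq : BEq (V × V)) a b) = (@BEq.beq _ instBEqProd a b) := by
      intro a b
      show decide (a = b) = (decide (a.1 = b.1) && decide (a.2 = b.2))
      by_cases h1 : a.1 = b.1 <;> by_cases h2 : a.2 = b.2 <;>
        simp [h1, h2, Prod.ext_iff]
    have h2 : (instBEqOfDecidableEq : BEq (V × V)).beq = (instBEqProd : BEq (V × V)).beq :=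
      funext fun a => funext fun b => h a b
    exact congrArg BEq.mk h2
  obtain ⟨hne, hcoe, hchain, hcyc⟩ := hl
  have hn : 0 < l.length := List.length_pos_iff.mpr hne
  have hnd : l.Nodup := by
    have h : (↑l : Multiset (V × V)).Nodup := by
      rw [hcoe]; exact BatchCut17.nodup_componentArcs G w
    exact Multiset.coe_nodup.mp h
  have hidxlt : ∀ x : V × V, x ∈ l → l.idxOf x < l.length := by
    intro x hx
    exact List.idxOf_lt_length_iff.mpr hx
  have hgetelem : ∀ (x : V × V) (h : l.idxOf x < l.length), l[l.idxOf x]'h = x := by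
    intro x h
    have h' : @List.idxOf _ instBEqOfDecidableEq x l < l.length := by rw [hI]; exact h
    exact List.getElem_idxOf h
  have hidxgetelem : ∀ (i : ℕ) (h : i < l.length), l.idxOf (l[i]'h) = i := by
    intro i h
    exact List.Nodup.idxOf_getElem hnd i h
  have hidxinj : ∀ {x y : V × V}, x ∈ l → y ∈ l → l.idxOf x = l.idxOf y → x = y := by
    intro x y hx hy h
    have h' : @List.idxOf _ instBEqOfDecidableEq x l = @List.idxOf _ instBEqOfDecidableEq y l := by
      rw [hI]; exact h
    exact (List.idxOf_inj hx).mp h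
  have hmem : ∀ a : V × V, a ∈ l ↔ (G.Adj a.1 a.2 ∨ a.2 = a.1) ∧ G.Reachable w a.1 := by
    intro a; rw [← Multiset.mem_coe, hcoe, BatchCut17.mem_componentArcs]
  -- cyclic chaining of consecutive arcs
  have hstep : ∀ (i : ℕ) (h : i < l.length),
      (l[i]'h).2 = (l[(i + 1) % l.length]'(Nat.mod_lt _ hn)).1 := by
    intro i h
    by_cases hi : i + 1 < l.length
    · have h2 := List.isChain_iff_getElem.mp hchain i (by omega)
      have hmod : (i + 1) % l.length = i + 1 := Nat.mod_eq_of_lt hi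
      simp only [hmod]
      exact h2
    · have hi2 : i + 1 = l.length := by omega
      have hmod : (i + 1) % l.length = 0 := by rw [hi2, Nat.mod_self]
      have hlast : l[i]'h = l.getLast hne := by
        rw [List.getLast_eq_getElem]
        congr 1
        omega
      have hhead : l[(i + 1) % l.length]'(Nat.mod_lt _ hn) = l.head hne := by
        rw [List.head_eq_getElem_zero]
        simp only [hmod]
      rw [hlast, hhead]
      exact hcyc hne
  have htwin : ∀ a : V × V, a ∈ l → G.Adj a.1 a.2 → (a.2, a.1) ∈ l := by
    intro a ha hadj
    rw [hmem] at ha ⊢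
    exact ⟨Or.inl hadj.symm, ha.2.trans hadj.reachable⟩
  have hloopmem : ∀ a : V × V, a ∈ l → (a.1, a.1) ∈ l := by
    intro a ha
    rw [hmem] at ha ⊢
    exact ⟨Or.inr rfl, ha.2⟩
  set f := fun a : V × V => l.getD ((l.idxOf (a.2, a.1) + 1) % l.length) a with hfdef
  have hfstep : ∀ a : V × V, a ∈ l → G.Adj a.1 a.2 →
      f a ∈ l ∧ (f a).1 = a.1 ∧
        l.idxOf (f a) = (l.idxOf (a.2, a.1) + 1) % l.length := by
    intro a ha hadj
    have htm : (a.2, a.1) ∈ l := htwin a ha hadj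
    have ht : l.idxOf (a.2, a.1) < l.length := hidxlt _ htm
    have hfa : f a = l[(l.idxOf (a.2, a.1) + 1) % l.length]'(Nat.mod_lt _ hn) := by
      simp only [hfdef]
      exact List.getD_eq_getElem _ _ (Nat.mod_lt _ hn)
    refine ⟨?_, ?_, ?_⟩
    · rw [hfa]; exact List.getElem_mem _
    · rw [hfa]
      have h2 := hstep (l.idxOf (a.2, a.1)) ht
      rw [hgetelem _ ht] at h2
      exact h2.symm
    · rw [hfa]
      exact hidxgetelem _ _
  -- Key lemma: the loop (u,u) does not lie cyclically strictly between (u,v) and (v,u)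
  have hL : ∀ a : V × V, a ∈ l → G.Adj a.1 a.2 →
      (l.idxOf (a.2, a.1) + l.length - l.idxOf a) % l.length <
        (l.idxOf (a.1, a.1) + l.length - l.idxOf a) % l.length := by
    intro a ha hadj
    have htm : (a.2, a.1) ∈ l := htwin a ha hadj
    have hlm : (a.1, a.1) ∈ l := hloopmem a ha
    have hpn : l.idxOf a < l.length := hidxlt _ ha
    have htn : l.idxOf (a.2, a.1) < l.length := hidxlt _ htm
    have hqn : l.idxOf (a.1, a.1) < l.length := hidxlt _ hlm
    have hne1 : a ≠ (a.2, a.1) := fun h => hadj.ne (congrArg Prod.fst h)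
    have hne2 : a ≠ (a.1, a.1) := fun h => hadj.ne (congrArg Prod.snd h).symm
    have hne3 : (a.2, a.1) ≠ (a.1, a.1) := fun h => hadj.ne (congrArg Prod.fst h).symm
    have hpt : l.idxOf a ≠ l.idxOf (a.2, a.1) :=
      fun h => hne1 (hidxinj ha htm h)
    have hpq : l.idxOf a ≠ l.idxOf (a.1, a.1) :=
      fun h => hne2 (hidxinj ha hlm h)
    have htq : l.idxOf (a.2, a.1) ≠ l.idxOf (a.1, a.1) :=
      fun h => hne3 (hidxinj htm hlm h)
    have hds : (l.idxOf a +
        (l.idxOf (a.2, a.1) + l.length - l.idxOf a) % l.length) % l.length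
        = l.idxOf (a.2, a.1) := BatchCut17.dlem1 _ _ hpn htn
    have hdm : (l.idxOf a +
        (l.idxOf (a.1, a.1) + l.length - l.idxOf a) % l.length) % l.length
        = l.idxOf (a.1, a.1) := BatchCut17.dlem1 _ _ hpn hqn
    have hs0 : (l.idxOf (a.2, a.1) + l.length - l.idxOf a) % l.length ≠ 0 := by
      intro h
      rw [h, Nat.add_zero, Nat.mod_eq_of_lt hpn] at hds
      exact hpt hds
    have hm0 : (l.idxOf (a.1, a.1) + l.length - l.idxOf a) % l.length ≠ 0 := by
      intro h
      rw [h, Nat.add_zero, Nat.mod_eq_of_lt hpn] at hdm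
      exact hpq hdm
    have hsm : (l.idxOf (a.2, a.1) + l.length - l.idxOf a) % l.length ≠
        (l.idxOf (a.1, a.1) + l.length - l.idxOf a) % l.length := by
      intro h
      apply htq
      rw [← hds, ← hdm, h]
    by_contra hcon
    push_neg at hcon
    have hmlt : (l.idxOf (a.1, a.1) + l.length - l.idxOf a) % l.length <
        (l.idxOf (a.2, a.1) + l.length - l.idxOf a) % l.length :=
      lt_of_le_of_ne hcon (Ne.symm hsm)
    have hsn : (l.idxOf (a.2, a.1) + l.length - l.idxOf a) % l.length < l.length :=
      Nat.mod_lt _ hn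
    have hbr : ¬ (G \ SimpleGraph.fromEdgeSet {s(a.1, a.2)}).Reachable a.1 a.2 :=
      (SimpleGraph.isBridge_iff.mp
        (SimpleGraph.isAcyclic_iff_forall_edge_isBridge.mp hF (G.mem_edgeSet.mpr hadj)))
    -- walk from a.2 along the tour
    have hwalk : ∀ j : ℕ, 1 ≤ j →
        j ≤ (l.idxOf (a.1, a.1) + l.length - l.idxOf a) % l.length →
        (G \ SimpleGraph.fromEdgeSet {s(a.1, a.2)}).Reachable a.2
          ((l[(l.idxOf a + j) % l.length]'(Nat.mod_lt _ hn)).1) := by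
      intro j
      induction j with
      | zero => intro h; exact absurd h (by omega)
      | succ j ih =>
        intro h1 hj
        have hnext : ((l.idxOf a + j) % l.length + 1) % l.length
            = (l.idxOf a + (j + 1)) % l.length := by
          rw [Nat.mod_add_mod, Nat.add_assoc]
        have hstep2 := hstep ((l.idxOf a + j) % l.length) (Nat.mod_lt _ hn)
        simp only [hnext] at hstep2
        simp only [← hstep2]
        by_cases hj1 : j = 0
        · subst hj1
          have hpa : l[(l.idxOf a + 0) % l.length]'(Nat.mod_lt _ hn) = a := by
            have : (l.idxOf a + 0) % l.length = l.idxOf a := by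
              rw [Nat.add_zero, Nat.mod_eq_of_lt hpn]
            simp only [this]
            exact hgetelem _ hpn
          rw [hpa]
        · have hj2 : 1 ≤ j := by omega
          have hprev := ih hj2 (by omega)
          have hjn : j < l.length := by omega
          have hc := (hmem _).mp
            (List.getElem_mem (Nat.mod_lt _ hn :
              (l.idxOf a + j) % l.length < l.length))
          rcases hc.1 with hadj2 | hloop2
          · -- a genuine edge; it is not the edge {a.1,a.2}
            have hedge : ¬ (s((l[(l.idxOf a + j) % l.length]'(Nat.mod_lt _ hn)).1,
                (l[(l.idxOf a + j) % l.length]'(Nat.mod_lt _ hn)).2) = s(a.1, a.2)) := by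
              intro hE
              have hci : l.idxOf (l[(l.idxOf a + j) % l.length]'(Nat.mod_lt _ hn))
                  = (l.idxOf a + j) % l.length := hidxgetelem _ _
              have hd2 := BatchCut17.dlem2 (l.idxOf a) j hpn hjn
              rcases Sym2.eq_iff.mp hE with ⟨h1', h2'⟩ | ⟨h1', h2'⟩
              · have hca : l[(l.idxOf a + j) % l.length]'(Nat.mod_lt _ hn) = a :=
                  Prod.ext h1' h2'
                rw [hca] at hci
                rw [← hci] at hd2
                have hee : l.idxOf a + l.length - l.idxOf a = l.length := by omega
                rw [hee, Nat.mod_self] at hd2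
                exact hj1 hd2.symm
              · have hca : l[(l.idxOf a + j) % l.length]'(Nat.mod_lt _ hn) = (a.2, a.1) :=
                  Prod.ext h1' h2'
                rw [hca] at hci
                rw [← hci] at hd2
                omega
            have hGadj : (G \ SimpleGraph.fromEdgeSet {s(a.1, a.2)}).Adj
                (l[(l.idxOf a + j) % l.length]'(Nat.mod_lt _ hn)).1
                (l[(l.idxOf a + j) % l.length]'(Nat.mod_lt _ hn)).2 := by
              rw [SimpleGraph.sdiff_adj, SimpleGraph.fromEdgeSet_adj]
              exact ⟨hadj2, fun hc' => hedge (Set.mem_singleton_iff.mp hc'.1)⟩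
            exact hprev.trans hGadj.reachable
          · rw [hloop2]
            exact hprev
    have hfin := hwalk _ (Nat.one_le_iff_ne_zero.mpr hm0) le_rfl
    simp only [hdm] at hfin
    rw [hgetelem _ hqn] at hfin
    exact hbr hfin.symm
  -- main induction on the cyclic distance to the loop
  have hreach : ∀ N : ℕ, ∀ a : V × V, a ∈ l →
      (l.idxOf (a.1, a.1) + l.length - l.idxOf a) % l.length ≤ N →
      ∃ k : ℕ, f^[k] a = (a.1, a.1) := by
    intro N
    induction N with
    | zero =>
      intro a ha hle
      by_cases hla : a.2 = a.1
      · exact ⟨0, by rw [Function.iterate_zero_apply]; exact Prod.ext rfl hla⟩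
      · exfalso
        have hadj : G.Adj a.1 a.2 := ((hmem a).mp ha).1.resolve_right hla
        have := hL a ha hadj
        omega
    | succ N ih =>
      intro a ha hle
      by_cases hla : a.2 = a.1
      · exact ⟨0, by rw [Function.iterate_zero_apply]; exact Prod.ext rfl hla⟩
      · have hadj : G.Adj a.1 a.2 := ((hmem a).mp ha).1.resolve_right hla
        obtain ⟨hfl, hf1, hfi⟩ := hfstep a ha hadj
        have hLa := hL a ha hadj
        have hpn : l.idxOf a < l.length := hidxlt _ ha
        have htm : (a.2, a.1) ∈ l := htwin a ha hadj
        have hlm : (a.1, a.1) ∈ l := hloopmem a ha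
        have htn : l.idxOf (a.2, a.1) < l.length := hidxlt _ htm
        have hqn : l.idxOf (a.1, a.1) < l.length := hidxlt _ hlm
        have hds : (l.idxOf a +
            (l.idxOf (a.2, a.1) + l.length - l.idxOf a) % l.length) % l.length
            = l.idxOf (a.2, a.1) := BatchCut17.dlem1 _ _ hpn htn
        have hdm : (l.idxOf a +
            (l.idxOf (a.1, a.1) + l.length - l.idxOf a) % l.length) % l.length
            = l.idxOf (a.1, a.1) := BatchCut17.dlem1 _ _ hpn hqn
        have hmn : (l.idxOf (a.1, a.1) + l.length - l.idxOf a) % l.length < l.length :=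
          Nat.mod_lt _ hn
        have hidx : l.idxOf (f a) =
            (l.idxOf a +
              (l.idxOf (a.2, a.1) + l.length - l.idxOf a) % l.length + 1) % l.length := by
          conv_lhs => rw [hfi, ← hds]
          rw [Nat.mod_add_mod]
        -- the measure of `f a`
        have hmeas : (l.idxOf ((f a).1, (f a).1) + l.length - l.idxOf (f a)) % l.length
            = (l.idxOf (a.1, a.1) + l.length - l.idxOf a) % l.length
              - (l.idxOf (a.2, a.1) + l.length - l.idxOf a) % l.length - 1 := by
          rw [hf1, hidx]
          have hq_eq : l.idxOf (a.1, a.1) =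
              ((l.idxOf a +
                (l.idxOf (a.2, a.1) + l.length - l.idxOf a) % l.length + 1) % l.length +
               ((l.idxOf (a.1, a.1) + l.length - l.idxOf a) % l.length
                - (l.idxOf (a.2, a.1) + l.length - l.idxOf a) % l.length - 1)) % l.length := by
            rw [Nat.mod_add_mod]
            have h1 : l.idxOf a +
                (l.idxOf (a.2, a.1) + l.length - l.idxOf a) % l.length + 1 +
                ((l.idxOf (a.1, a.1) + l.length - l.idxOf a) % l.length
                 - (l.idxOf (a.2, a.1) + l.length - l.idxOf a) % l.length - 1)
                = l.idxOf a +
                  (l.idxOf (a.1, a.1) + l.length - l.idxOf a) % l.length := by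
              omega
            rw [h1, hdm]
          conv_lhs => rw [hq_eq]
          exact BatchCut17.dlem2 _ _ (Nat.mod_lt _ hn) (by omega)
        obtain ⟨k, hk⟩ := ih (f a) hfl (by rw [hmeas]; omega)
        refine ⟨k + 1, ?_⟩
        rw [Function.iterate_succ_apply, hk, hf1]
  intro e he
  have hel : e ∈ l := hM e he
  obtain ⟨k, hk⟩ := hreach l.length e hel (le_of_lt (Nat.mod_lt _ hn))
  exact ⟨⟨k, hk⟩, ⟨k, by rw [hk]; exact hloop e.1⟩⟩
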